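/- For every ε > 0 and every positive integer q, the number of matrices γ ∈ SL₂(ℤ) with γ ≡ I mod q and all entries of absolute value at most T is O_ε(T^ε (T²/q³ + T/q + 1)). -/

import Mathlib

open Finset Real

set_option maxHeartbeats 2000000

section Helpers

open Finset

lemma int_ediv_le_real {a b : ℤ} (hb : 0 < b) : ((a / b : ℤ) : ℝ) ≤ (a:ℝ)/(b:ℝ) := by
  rw [le_div_iff₀ (by exact_mod_cast hb)]
  exact_mod_cast Int.ediv_mul_le a hb.ne'

lemma count_cong (M : ℤ) (hM : 0 ≤ M) (m : ℕ) (hm : 0 < m) (r : ℤ) :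
    (((Finset.Icc (-M) M).filter (fun x => (m:ℤ) ∣ x - r)).card : ℝ)
      ≤ 2 * (M:ℝ) / (m:ℝ) + 1 := by
  have hm' : (0:ℤ) < (m:ℤ) := by exact_mod_cast hm
  set lo : ℤ := -((M + r) / m) with hlo
  set hi : ℤ := (M - r) / m with hhi
  have hcard : ((Finset.Icc (-M) M).filter (fun x => (m:ℤ) ∣ x - r)).card
      ≤ (Finset.Icc lo hi).card := by
    apply Finset.card_le_card_of_injOn (fun x => (x - r) / m)
    · intro x hx
      simp only [Finset.mem_coe, Finset.mem_filter, Finset.mem_Icc] at hx ⊢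
      obtain ⟨⟨h1, h2⟩, y, hy⟩ := hx
      have hxy : (x - r) / m = y := by rw [hy, Int.mul_ediv_cancel_left _ hm'.ne']
      rw [hxy]
      constructor
      · rw [hlo, neg_le]
        have h3 : (m:ℤ) * (-y) ≤ M + r := by nlinarith [hy]
        calc -y = (m:ℤ) * (-y) / m := (Int.mul_ediv_cancel_left _ hm'.ne').symm
          _ ≤ (M + r) / m := Int.ediv_le_ediv hm' h3
      · have h3 : (m:ℤ) * y ≤ M - r := by linarith [hy.symm.le]
        calc y = (m:ℤ) * y / m := (Int.mul_ediv_cancel_left _ hm'.ne').symm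
          _ ≤ (M - r) / m := Int.ediv_le_ediv hm' (by linarith [hy])
    · intro x1 h1 x2 h2 he
      simp only [Finset.mem_coe, Finset.mem_filter] at h1 h2
      obtain ⟨y1, hy1⟩ := h1.2
      obtain ⟨y2, hy2⟩ := h2.2
      simp only at he
      rw [hy1, hy2, Int.mul_ediv_cancel_left _ hm'.ne', Int.mul_ediv_cancel_left _ hm'.ne'] at he
      have : x1 - r = x2 - r := by rw [hy1, hy2, he]
      linarith
  have h1 : ((Finset.Icc lo hi).card : ℝ) ≤ 2 * (M:ℝ) / (m:ℝ) + 1 := by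
    rw [Int.card_Icc]
    have hm0 : (0:ℝ) < (m:ℝ) := by exact_mod_cast hm
    by_cases hle : lo ≤ hi
    · have hnn : (0:ℤ) ≤ hi + 1 - lo := by omega
      have h0 := Int.toNat_of_nonneg hnn
      have : ((hi + 1 - lo).toNat : ℝ) = (hi:ℝ) + 1 - lo := by exact_mod_cast h0
      rw [this]
      have hhi' : (hi:ℝ) ≤ ((M:ℝ) - r) / m := by
        rw [hhi]; exact_mod_cast int_ediv_le_real hm'
      have hlo' : -(((M:ℝ) + r) / m) ≤ (lo:ℝ) := by
        rw [hlo]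
        push_cast
        have := int_ediv_le_real (a := M + r) hm'
        push_cast at this
        linarith
      have hM0 : (0:ℝ) ≤ (M:ℝ) := by exact_mod_cast hM
      have e1 : ((M:ℝ) - r) / m + ((M:ℝ) + r) / m = 2 * (M:ℝ) / m := by ring
      linarith
    · rw [Int.toNat_of_nonpos (by omega)]
      have hM0 : (0:ℝ) ≤ (M:ℝ) := by exact_mod_cast hM
      simp
      positivity
  calc (((Finset.Icc (-M) M).filter (fun x => (m:ℤ) ∣ x - r)).card : ℝ)
      ≤ ((Finset.Icc lo hi).card : ℝ) := by exact_mod_cast hcard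
    _ ≤ _ := h1

open Finset Real

set_option maxHeartbeats 2000000

lemma divisor_bound (ε : ℝ) (hε : 0 < ε) :
    ∃ C : ℝ, 1 ≤ C ∧ ∀ n : ℕ, n ≠ 0 → (n.divisors.card : ℝ) ≤ C * (n : ℝ) ^ ε := by
  set c : ℝ := 2 ^ ε - 1 with hc
  have hc0 : 0 < c := by
    have : (1:ℝ) < 2 ^ ε := by
      have := Real.rpow_lt_rpow_left_iff (x := (2:ℝ)) (y := 0) (z := ε) (by norm_num)
      simpa using this.mpr hε
    linarith
  set K : ℝ := max 1 (1 / c) with hK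
  have hK1 : 1 ≤ K := le_max_left _ _
  have hKc : 1 ≤ K * c := by
    have : 1 / c ≤ K := le_max_right _ _
    calc (1:ℝ) = (1/c) * c := by field_simp
    _ ≤ K * c := by nlinarith
  set Ns : ℕ := ⌈(2:ℝ) ^ (1/ε)⌉₊ + 1 with hNs
  refine ⟨K ^ Ns, one_le_pow₀ hK1, ?_⟩
  intro n hn
  -- key pointwise bound
  have key : ∀ p ∈ n.primeFactors,
      ((n.factorization p + 1 : ℕ) : ℝ) ≤
        (if (p:ℝ) < 2 ^ (1/ε) then K else 1) * ((p:ℝ) ^ ε) ^ (n.factorization p) := by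
    intro p hp
    have hprime := Nat.prime_of_mem_primeFactors hp
    have hp2 : (2:ℝ) ≤ (p:ℝ) := by exact_mod_cast hprime.two_le
    set a := n.factorization p
    have hpε : (2:ℝ) ^ ε ≤ (p:ℝ) ^ ε :=
      Real.rpow_le_rpow (by norm_num) hp2 hε.le
    by_cases hsmall : (p:ℝ) < 2 ^ (1/ε)
    · simp only [hsmall, if_pos]
      have bern : 1 + (a:ℝ) * c ≤ (1 + c) ^ a := by
        have := one_add_mul_le_pow (a := c) (by linarith) a
        simpa using this
      have h1 : ((a + 1 : ℕ):ℝ) ≤ K * (1 + (a:ℝ) * c) := by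
        push_cast
        nlinarith [hK1, hKc, Nat.cast_nonneg (α := ℝ) a]
      have h2 : (1 + c) ^ a ≤ ((p:ℝ) ^ ε) ^ a := by
        apply pow_le_pow_left₀ (by linarith) (by simpa [hc] using hpε)
      calc ((a + 1 : ℕ):ℝ) ≤ K * (1 + (a:ℝ) * c) := h1
        _ ≤ K * (1 + c) ^ a := by nlinarith [bern, hK1]
        _ ≤ K * ((p:ℝ) ^ ε) ^ a := by nlinarith [h2, hK1]
    · simp only [hsmall, if_neg, not_false_iff, one_mul]
      have h2 : (2:ℝ) ≤ (p:ℝ) ^ ε := by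
        have : ((2:ℝ) ^ (1/ε)) ^ ε ≤ (p:ℝ) ^ ε :=
          Real.rpow_le_rpow (Real.rpow_nonneg (by norm_num) _) (not_lt.mp hsmall) hε.le
        rwa [← Real.rpow_mul (by norm_num), one_div_mul_cancel hε.ne', Real.rpow_one] at this
      calc ((a + 1 : ℕ):ℝ) ≤ (2:ℝ) ^ a := by
            have := Nat.lt_two_pow_self (n := a)
            exact_mod_cast this
        _ ≤ ((p:ℝ) ^ ε) ^ a := pow_le_pow_left₀ (by norm_num) h2 a
  -- assemble
  have hd : (n.divisors.card : ℝ) = ∏ p ∈ n.primeFactors, ((n.factorization p + 1 : ℕ) : ℝ) := by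
    rw [Nat.card_divisors hn]
    push_cast
    rfl
  have step1 : (n.divisors.card : ℝ) ≤
      ∏ p ∈ n.primeFactors, (if (p:ℝ) < 2 ^ (1/ε) then K else 1) * ((p:ℝ) ^ ε) ^ (n.factorization p) := by
    rw [hd]
    exact Finset.prod_le_prod (fun p _ => by positivity) key
  have hn_eq : (n:ℝ) = ∏ p ∈ n.primeFactors, (p:ℝ) ^ (n.factorization p) := by
    have : (n.factorization.prod (· ^ ·) : ℕ) = n := Nat.factorization_prod_pow_eq_self hn
    rw [Nat.prod_factorization_eq_prod_primeFactors] at this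
    conv_lhs => rw [← this]
    push_cast
    rfl
  have hprod2 : ∏ p ∈ n.primeFactors, ((p:ℝ) ^ ε) ^ (n.factorization p) = (n:ℝ) ^ ε := by
    rw [hn_eq, ← Real.finset_prod_rpow _ _ (fun p _ => by positivity)]
    apply Finset.prod_congr rfl
    intro p _
    rw [← Real.rpow_natCast ((p:ℝ) ^ ε), ← Real.rpow_natCast (p:ℝ), ← Real.rpow_mul (by positivity),
      ← Real.rpow_mul (by positivity), mul_comm]
  have hite : ∏ p ∈ n.primeFactors, (if (p:ℝ) < 2 ^ (1/ε) then K else (1:ℝ)) ≤ K ^ Ns := by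
    rw [Finset.prod_ite, Finset.prod_const, Finset.prod_const, one_pow, mul_one]
    apply pow_le_pow_right₀ hK1
    calc (n.primeFactors.filter (fun p : ℕ => (p:ℝ) < 2 ^ (1/ε))).card
        ≤ (Finset.range Ns).card := by
          apply Finset.card_le_card
          intro p hp
          simp only [Finset.mem_filter] at hp
          simp only [Finset.mem_range, hNs]
          have : (p:ℝ) ≤ 2 ^ (1/ε) := hp.2.le
          have : p ≤ ⌈(2:ℝ) ^ (1/ε)⌉₊ := by
            calc p = ⌈(p:ℝ)⌉₊ := (Nat.ceil_natCast p).symm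
            _ ≤ _ := Nat.ceil_le_ceil this
          omega
      _ = Ns := Finset.card_range Ns
  calc (n.divisors.card : ℝ) ≤ _ := step1
    _ = (∏ p ∈ n.primeFactors, (if (p:ℝ) < 2 ^ (1/ε) then K else 1)) *
        (∏ p ∈ n.primeFactors, ((p:ℝ) ^ ε) ^ (n.factorization p)) := Finset.prod_mul_distrib
    _ ≤ K ^ Ns * (n:ℝ) ^ ε := by
        rw [hprod2]
        exact mul_le_mul_of_nonneg_right hite (by positivity)

open Finset

lemma card_pairs (M : ℤ) (n : ℤ) (hn : n ≠ 0) :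
    ((((Finset.Icc (-M) M) ×ˢ (Finset.Icc (-M) M)).filter
        (fun p : ℤ×ℤ => p.1 * p.2 = n)).card : ℝ)
      ≤ 2 * (n.natAbs.divisors.card : ℝ) := by
  have key : (((Finset.Icc (-M) M) ×ˢ (Finset.Icc (-M) M)).filter
        (fun p : ℤ×ℤ => p.1 * p.2 = n)).card
      ≤ (n.natAbs.divisors.image (fun k : ℕ => (k:ℤ)) ∪
         n.natAbs.divisors.image (fun k : ℕ => -(k:ℤ))).card := by
    apply Finset.card_le_card_of_injOn (fun p => p.1)
    · intro p hp
      simp only [Finset.mem_coe, Finset.mem_filter] at hp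
      have hdvd : p.1 ∣ n := ⟨p.2, hp.2.symm⟩
      have h1 : p.1.natAbs ∣ n.natAbs := Int.natAbs_dvd_natAbs.mpr hdvd
      have hmem : p.1.natAbs ∈ n.natAbs.divisors :=
        Nat.mem_divisors.mpr ⟨h1, Int.natAbs_ne_zero.mpr hn⟩
      rcases Int.natAbs_eq p.1 with h | h
      · exact Finset.mem_union_left _ (Finset.mem_image.mpr ⟨_, hmem, h.symm⟩)
      · exact Finset.mem_union_right _ (Finset.mem_image.mpr ⟨_, hmem, h.symm⟩)
    · intro p hp p' hp' he
      simp only [Finset.mem_coe, Finset.mem_filter] at hp hp'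
      simp only at he
      have h1 : p.1 ≠ 0 := by
        intro h0; rw [h0, zero_mul] at hp; exact hn hp.2.symm
      have : p.1 * p.2 = p.1 * p'.2 := by rw [hp.2, ← hp'.2, he]
      have h2 : p.2 = p'.2 := mul_left_cancel₀ h1 this
      exact Prod.ext he h2
  calc _ ≤ ((n.natAbs.divisors.image (fun k : ℕ => (k:ℤ)) ∪
         n.natAbs.divisors.image (fun k : ℕ => -(k:ℤ))).card : ℝ) := by exact_mod_cast key
    _ ≤ (n.natAbs.divisors.image (fun k : ℕ => (k:ℤ))).card +
        ((n.natAbs.divisors.image (fun k : ℕ => -(k:ℤ))).card : ℝ) := by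
        exact_mod_cast Finset.card_union_le _ _
    _ ≤ 2 * (n.natAbs.divisors.card : ℝ) := by
        have a1 := Finset.card_image_le (s := n.natAbs.divisors) (f := fun k : ℕ => (k:ℤ))
        have a2 := Finset.card_image_le (s := n.natAbs.divisors) (f := fun k : ℕ => -(k:ℤ))
        have b1 : ((n.natAbs.divisors.image (fun k : ℕ => (k:ℤ))).card : ℝ) ≤ n.natAbs.divisors.card := by exact_mod_cast a1
        have b2 : ((n.natAbs.divisors.image (fun k : ℕ => -(k:ℤ))).card : ℝ) ≤ n.natAbs.divisors.card := by exact_mod_cast a2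
        linarith

end Helpers

def emb (γ : Matrix.SpecialLinearGroup (Fin 2) ℤ) : ℤ × ℤ × ℤ × ℤ :=
  ((γ : Matrix (Fin 2) (Fin 2) ℤ) 0 0, (γ : Matrix (Fin 2) (Fin 2) ℤ) 1 1,
   (γ : Matrix (Fin 2) (Fin 2) ℤ) 0 1, (γ : Matrix (Fin 2) (Fin 2) ℤ) 1 0)

lemma emb_inj : Function.Injective emb := by
  intro γ δ h
  simp only [emb, Prod.mk.injEq] at h
  apply Subtype.ext
  apply Matrix.ext
  intro i j
  fin_cases i <;> fin_cases j <;> tauto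

lemma ncard_le_of_emb {X : Set (Matrix.SpecialLinearGroup (Fin 2) ℤ)}
    {F : Finset (ℤ × ℤ × ℤ × ℤ)} (h : ∀ γ ∈ X, emb γ ∈ F) : X.ncard ≤ F.card := by
  have h1 : emb '' X ⊆ ↑F := by rintro _ ⟨γ, hγ, rfl⟩; exact h γ hγ
  calc X.ncard = (emb '' X).ncard := (Set.ncard_image_of_injOn emb_inj.injOn).symm
    _ ≤ (↑F : Set (ℤ × ℤ × ℤ × ℤ)).ncard := Set.ncard_le_ncard h1 F.finite_toSet
    _ = F.card := Set.ncard_coe_finset F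

lemma finite_of_emb {X : Set (Matrix.SpecialLinearGroup (Fin 2) ℤ)}
    {F : Finset (ℤ × ℤ × ℤ × ℤ)} (h : ∀ γ ∈ X, emb γ ∈ F) : X.Finite := by
  apply Set.Finite.of_finite_image _ emb_inj.injOn
  exact F.finite_toSet.subset (by rintro _ ⟨γ, hγ, rfl⟩; exact h γ hγ)

theorem stmt0 :
    ∀ ε : ℝ, 0 < ε → ∃ C : ℝ, 0 < C ∧ ∀ q : ℕ, 0 < q → ∀ T : ℝ, 1 ≤ T →
      (Set.Finite {γ : Matrix.SpecialLinearGroup (Fin 2) ℤ |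
          (∀ i j, (q : ℤ) ∣ ((γ : Matrix (Fin 2) (Fin 2) ℤ) - 1) i j) ∧
          (∀ i j, (|(γ : Matrix (Fin 2) (Fin 2) ℤ) i j| : ℝ) ≤ T)}) ∧
      ((Set.ncard {γ : Matrix.SpecialLinearGroup (Fin 2) ℤ |
          (∀ i j, (q : ℤ) ∣ ((γ : Matrix (Fin 2) (Fin 2) ℤ) - 1) i j) ∧
          (∀ i j, (|(γ : Matrix (Fin 2) (Fin 2) ℤ) i j| : ℝ) ≤ T)} : ℝ)
        ≤ C * T ^ ε * (T ^ 2 / (q : ℝ) ^ 3 + T / (q : ℝ) + 1)) := by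
  intro ε hε
  obtain ⟨Cd, hCd1, hCd⟩ := divisor_bound (ε/2) (by linarith)
  have h2e : (0:ℝ) < 2 ^ (ε/2) := Real.rpow_pos_of_pos (by norm_num) _
  refine ⟨16 + 8 * Cd * 2 ^ (ε/2), by nlinarith, ?_⟩
  intro q hq T hT
  set S : Set (Matrix.SpecialLinearGroup (Fin 2) ℤ) :=
    {γ : Matrix.SpecialLinearGroup (Fin 2) ℤ |
          (∀ i j, (q : ℤ) ∣ ((γ : Matrix (Fin 2) (Fin 2) ℤ) - 1) i j) ∧
          (∀ i j, (|(γ : Matrix (Fin 2) (Fin 2) ℤ) i j| : ℝ) ≤ T)} with hSdef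
  have hT0 : (0:ℝ) < T := by linarith
  have hq1 : (1:ℝ) ≤ (q:ℝ) := by exact_mod_cast hq
  have hq0 : (0:ℝ) < (q:ℝ) := by linarith
  have hTε : (1:ℝ) ≤ T ^ ε := Real.one_le_rpow hT hε.le
  set M : ℤ := ⌊T⌋ with hMdef
  have hM0 : (0:ℤ) ≤ M := Int.le_floor.mpr (by push_cast; linarith)
  have hMT : (M:ℝ) ≤ T := Int.floor_le T
  -- entry helpers
  have habs : ∀ (x : ℤ), |(x : ℝ)| ≤ T → x ∈ Finset.Icc (-M) M := by
    intro x hx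
    have hx' : ((|x| : ℤ) : ℝ) ≤ T := by push_cast; exact hx
    have h1 : |x| ≤ M := Int.le_floor.mpr hx'
    exact Finset.mem_Icc.mpr (abs_le.mp h1)
  have hentry : ∀ γ ∈ S, (q:ℤ) ∣ (γ : Matrix (Fin 2) (Fin 2) ℤ) 0 0 - 1 ∧
      (q:ℤ) ∣ (γ : Matrix (Fin 2) (Fin 2) ℤ) 1 1 - 1 ∧
      (q:ℤ) ∣ (γ : Matrix (Fin 2) (Fin 2) ℤ) 0 1 ∧
      (q:ℤ) ∣ (γ : Matrix (Fin 2) (Fin 2) ℤ) 1 0 := by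
    intro γ hγ
    obtain ⟨hdvd, _⟩ := hγ
    have e00 := hdvd 0 0
    have e11 := hdvd 1 1
    have e01 := hdvd 0 1
    have e10 := hdvd 1 0
    simp only [Matrix.sub_apply, Matrix.one_apply_eq] at e00 e11
    rw [Matrix.sub_apply, Matrix.one_apply_ne (by decide), sub_zero] at e01
    rw [Matrix.sub_apply, Matrix.one_apply_ne (by decide), sub_zero] at e10
    exact ⟨e00, e11, e01, e10⟩
  have hdet : ∀ γ : Matrix.SpecialLinearGroup (Fin 2) ℤ,
      (γ : Matrix (Fin 2) (Fin 2) ℤ) 0 0 * (γ : Matrix (Fin 2) (Fin 2) ℤ) 1 1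
        - (γ : Matrix (Fin 2) (Fin 2) ℤ) 0 1 * (γ : Matrix (Fin 2) (Fin 2) ℤ) 1 0 = 1 := by
    intro γ
    rw [← Matrix.det_fin_two]
    exact γ.prop
  have hIcc : ∀ γ ∈ S, ∀ i j, (γ : Matrix (Fin 2) (Fin 2) ℤ) i j ∈ Finset.Icc (-M) M := by
    intro γ hγ i j
    exact habs _ (hγ.2 i j)
  -- finsets
  set E0 : Finset ℤ := (Finset.Icc (-M) M).filter (fun x => (q:ℤ) ∣ x - 0) with hE0def
  set A : Finset ℤ := (Finset.Icc (-M) M).filter (fun x => (q:ℤ) ∣ x - 1) with hAdef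
  set B : ℤ → Finset ℤ :=
    (fun a => (Finset.Icc (-M) M).filter (fun d => ((q^2 : ℕ):ℤ) ∣ d - (2 - a))) with hBdef
  set Cs : ℤ → ℤ → Finset (ℤ × ℤ) :=
    (fun a d => ((Finset.Icc (-M) M) ×ˢ (Finset.Icc (-M) M)).filter
      (fun p : ℤ×ℤ => p.1 * p.2 = a*d - 1 ∧ a*d ≠ 1)) with hCsdef
  set Dmax : ℝ := 2 * (Cd * (2*T^2) ^ (ε/2)) with hDmaxdef
  have hDmax0 : 0 ≤ Dmax := by positivity
  set T1 : Finset (ℤ × ℤ × ℤ × ℤ) :=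
    A.biUnion (fun a => (B a).biUnion (fun d =>
      (Cs a d).image (fun p => (a, d, p.1, p.2)))) with hT1def
  set T0 : Finset (ℤ × ℤ × ℤ × ℤ) :=
    ({-1,1} : Finset ℤ) ×ˢ (({-1,1} : Finset ℤ) ×ˢ
      ((E0 ×ˢ E0).filter (fun p : ℤ×ℤ => p.1 = 0 ∨ p.2 = 0))) with hT0def
  -- split S
  set S0 : Set (Matrix.SpecialLinearGroup (Fin 2) ℤ) :=
    {γ ∈ S | (γ : Matrix (Fin 2) (Fin 2) ℤ) 0 0 * (γ : Matrix (Fin 2) (Fin 2) ℤ) 1 1 = 1}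
      with hS0def
  set S1 : Set (Matrix.SpecialLinearGroup (Fin 2) ℤ) :=
    {γ ∈ S | (γ : Matrix (Fin 2) (Fin 2) ℤ) 0 0 * (γ : Matrix (Fin 2) (Fin 2) ℤ) 1 1 ≠ 1}
      with hS1def
  -- memberships
  have hmem0 : ∀ γ ∈ S0, emb γ ∈ T0 := by
    intro γ hγ
    obtain ⟨hγS, had⟩ := hγ
    obtain ⟨h00, h11, h01, h10⟩ := hentry γ hγS
    have hbc : (γ : Matrix (Fin 2) (Fin 2) ℤ) 0 1 * (γ : Matrix (Fin 2) (Fin 2) ℤ) 1 0 = 0 := by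
      have := hdet γ; linarith [had]
    rcases Int.mul_eq_one_iff_eq_one_or_neg_one.mp had with ⟨ha, hd⟩ | ⟨ha, hd⟩ <;>
    · simp only [hT0def, emb, Finset.mem_product, Finset.mem_filter, Finset.mem_insert,
        Finset.mem_singleton]
      refine ⟨by simp [ha], by simp [hd], ⟨?_, ?_⟩, ?_⟩
      · simp only [hE0def, Finset.mem_filter, sub_zero]
        exact ⟨hIcc γ hγS 0 1, h01⟩
      · simp only [hE0def, Finset.mem_filter, sub_zero]
        exact ⟨hIcc γ hγS 1 0, h10⟩
      · rcases mul_eq_zero.mp hbc with h | h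
        · exact Or.inl h
        · exact Or.inr h
  have hmem1 : ∀ γ ∈ S1, emb γ ∈ T1 := by
    intro γ hγ
    obtain ⟨hγS, had⟩ := hγ
    obtain ⟨h00, h11, h01, h10⟩ := hentry γ hγS
    obtain ⟨α, hα⟩ := h00
    obtain ⟨δ, hδ⟩ := h11
    obtain ⟨β, hβ⟩ := h01
    obtain ⟨c', hc'⟩ := h10
    rw [hT1def]
    apply Finset.mem_biUnion.mpr
    refine ⟨(γ : Matrix (Fin 2) (Fin 2) ℤ) 0 0, ?_, ?_⟩
    · simp only [hAdef, Finset.mem_filter]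
      exact ⟨hIcc γ hγS 0 0, ⟨α, hα⟩⟩
    apply Finset.mem_biUnion.mpr
    refine ⟨(γ : Matrix (Fin 2) (Fin 2) ℤ) 1 1, ?_, ?_⟩
    · simp only [hBdef, Finset.mem_filter]
      refine ⟨hIcc γ hγS 1 1, ?_⟩
      have hsq : ((q^2 : ℕ):ℤ) = (q:ℤ)^2 := by push_cast; ring
      rw [hsq]
      refine ⟨β * c' - α * δ, ?_⟩
      have hd2 := hdet γ
      have ha' : (γ : Matrix (Fin 2) (Fin 2) ℤ) 0 0 = 1 + q*α := by linarith
      have hd' : (γ : Matrix (Fin 2) (Fin 2) ℤ) 1 1 = 1 + q*δ := by linarith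
      rw [ha', hd', hβ, hc'] at hd2
      rw [ha', hd']
      linear_combination hd2
    · apply Finset.mem_image.mpr
      refine ⟨((γ : Matrix (Fin 2) (Fin 2) ℤ) 0 1, (γ : Matrix (Fin 2) (Fin 2) ℤ) 1 0), ?_, rfl⟩
      simp only [hCsdef, Finset.mem_filter, Finset.mem_product]
      refine ⟨⟨hIcc γ hγS 0 1, hIcc γ hγS 1 0⟩, ?_, had⟩
      have := hdet γ; linarith
  -- finiteness
  have hSsplit : S = S0 ∪ S1 := by
    ext γ
    simp only [hS0def, hS1def, Set.mem_union, Set.mem_setOf_eq, Set.mem_sep_iff]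
    tauto
  have hfin0 : S0.Finite := finite_of_emb hmem0
  have hfin1 : S1.Finite := finite_of_emb hmem1
  have hfinS : S.Finite := by rw [hSsplit]; exact hfin0.union hfin1
  refine ⟨hfinS, ?_⟩
  -- counting
  have cE : (E0.card : ℝ) ≤ 2*T/(q:ℝ) + 1 := by
    have h := count_cong M hM0 q hq 0
    rw [← hE0def] at h
    have h2 : 2 * (M:ℝ) / (q:ℝ) ≤ 2 * T / (q:ℝ) := by gcongr
    linarith
  have cA : (A.card : ℝ) ≤ 2*T/(q:ℝ) + 1 := by
    have h := count_cong M hM0 q hq 1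
    rw [← hAdef] at h
    have h2 : 2 * (M:ℝ) / (q:ℝ) ≤ 2 * T / (q:ℝ) := by gcongr
    linarith
  have cB : ∀ a : ℤ, ((B a).card : ℝ) ≤ 2*T/(q:ℝ)^2 + 1 := by
    intro a
    have h := count_cong M hM0 (q^2) (by positivity) (2 - a)
    have hBa : B a = (Finset.Icc (-M) M).filter (fun d => ((q^2 : ℕ):ℤ) ∣ d - (2 - a)) := by
      rw [hBdef]
    rw [← hBa] at h
    have hc : ((q^2 : ℕ) : ℝ) = (q:ℝ)^2 := by push_cast; ring
    rw [hc] at h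
    have h2 : 2 * (M:ℝ) / (q:ℝ)^2 ≤ 2 * T / (q:ℝ)^2 := by gcongr
    linarith
  have hCsle : ∀ a ∈ Finset.Icc (-M) M, ∀ d ∈ Finset.Icc (-M) M,
      ((Cs a d).card : ℝ) ≤ Dmax := by
    intro a ha d hd
    by_cases h1 : a*d = 1
    · have hempty : Cs a d = ∅ := by
        rw [hCsdef]
        apply Finset.filter_false_of_mem
        intro p _
        simp [h1]
      rw [hempty]
      simpa using hDmax0
    · have hn0 : a*d - 1 ≠ 0 := sub_ne_zero.mpr h1
      have hsub : Cs a d ⊆ ((Finset.Icc (-M) M) ×ˢ (Finset.Icc (-M) M)).filter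
          (fun p : ℤ×ℤ => p.1 * p.2 = a*d - 1) := by
        intro p hp
        simp only [hCsdef, Finset.mem_filter] at hp ⊢
        exact ⟨hp.1, hp.2.1⟩
      have h2 := card_pairs M (a*d-1) hn0
      have haT : |(a:ℝ)| ≤ T := by
        rw [Finset.mem_Icc] at ha
        have : |a| ≤ M := abs_le.mpr ha
        calc |(a:ℝ)| = ((|a|:ℤ):ℝ) := by push_cast; ring
          _ ≤ (M:ℝ) := by exact_mod_cast this
          _ ≤ T := hMT
      have hdT : |(d:ℝ)| ≤ T := by
        rw [Finset.mem_Icc] at hd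
        have : |d| ≤ M := abs_le.mpr hd
        calc |(d:ℝ)| = ((|d|:ℤ):ℝ) := by push_cast; ring
          _ ≤ (M:ℝ) := by exact_mod_cast this
          _ ≤ T := hMT
      have hNa : (((a*d-1).natAbs : ℕ) : ℝ) ≤ 2*T^2 := by
        have he : (((a*d-1).natAbs : ℕ) : ℝ) = |((a:ℝ))*(d:ℝ) - 1| := by
          rw [Nat.cast_natAbs]
          push_cast
          ring_nf
        rw [he]
        have habs2 : |(a:ℝ)*(d:ℝ) - 1| ≤ |(a:ℝ)| * |(d:ℝ)| + 1 := by
          calc |(a:ℝ)*(d:ℝ) - 1| ≤ |(a:ℝ)*(d:ℝ)| + |(1:ℝ)| := abs_sub _ _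
            _ = |(a:ℝ)| * |(d:ℝ)| + 1 := by rw [abs_mul]; norm_num
        nlinarith [abs_nonneg ((a:ℝ)), abs_nonneg ((d:ℝ))]
      have h3 := hCd (a*d-1).natAbs (Int.natAbs_ne_zero.mpr hn0)
      have h4 : (((a*d-1).natAbs : ℕ) : ℝ) ^ (ε/2) ≤ (2*T^2) ^ (ε/2) :=
        Real.rpow_le_rpow (by positivity) hNa (by linarith)
      have h5 : ((Cs a d).card : ℝ) ≤ ((((Finset.Icc (-M) M) ×ˢ (Finset.Icc (-M) M)).filter
          (fun p : ℤ×ℤ => p.1 * p.2 = a*d - 1)).card : ℝ) := by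
        exact_mod_cast Finset.card_le_card hsub
      have h6 : (0:ℝ) ≤ (((a*d-1).natAbs : ℕ) : ℝ) ^ (ε/2) := by positivity
      calc ((Cs a d).card : ℝ) ≤ _ := h5
        _ ≤ 2 * ((a*d-1).natAbs.divisors.card : ℝ) := h2
        _ ≤ 2 * (Cd * (((a*d-1).natAbs : ℕ) : ℝ) ^ (ε/2)) := by linarith
        _ ≤ 2 * (Cd * (2*T^2) ^ (ε/2)) := by nlinarith
        _ = Dmax := by rw [hDmaxdef]
  -- card of T1
  have hBsub : ∀ a : ℤ, ∀ d ∈ B a, d ∈ Finset.Icc (-M) M := by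
    intro a d hd
    rw [hBdef] at hd
    exact (Finset.mem_filter.mp hd).1
  have hAsub : ∀ a ∈ A, a ∈ Finset.Icc (-M) M := by
    intro a ha
    rw [hAdef] at ha
    exact (Finset.mem_filter.mp ha).1
  have hT1card : (T1.card : ℝ) ≤ (2*T/(q:ℝ) + 1) * ((2*T/(q:ℝ)^2 + 1) * Dmax) := by
    have step : T1.card ≤ ∑ a ∈ A, ∑ d ∈ B a, (Cs a d).card := by
      rw [hT1def]
      calc (A.biUnion fun a => (B a).biUnion fun d =>
            (Cs a d).image (fun p => (a, d, p.1, p.2))).card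
          ≤ ∑ a ∈ A, ((B a).biUnion fun d =>
            (Cs a d).image (fun p => (a, d, p.1, p.2))).card := Finset.card_biUnion_le
        _ ≤ ∑ a ∈ A, ∑ d ∈ B a, ((Cs a d).image (fun p => (a, d, p.1, p.2))).card :=
            Finset.sum_le_sum (fun a _ => Finset.card_biUnion_le)
        _ ≤ ∑ a ∈ A, ∑ d ∈ B a, (Cs a d).card :=
            Finset.sum_le_sum (fun a _ => Finset.sum_le_sum (fun d _ => Finset.card_image_le))
    have hBDnn : (0:ℝ) ≤ (2*T/(q:ℝ)^2 + 1) * Dmax := by positivity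
    calc (T1.card : ℝ) ≤ ∑ a ∈ A, ∑ d ∈ B a, ((Cs a d).card : ℝ) := by exact_mod_cast step
      _ ≤ ∑ a ∈ A, ∑ d ∈ B a, Dmax :=
          Finset.sum_le_sum (fun a ha => Finset.sum_le_sum
            (fun d hd => hCsle a (hAsub a ha) d (hBsub a d hd)))
      _ = ∑ a ∈ A, ((B a).card : ℝ) * Dmax := by
          simp [Finset.sum_const, nsmul_eq_mul]
      _ ≤ ∑ a ∈ A, (2*T/(q:ℝ)^2 + 1) * Dmax :=
          Finset.sum_le_sum (fun a _ => mul_le_mul_of_nonneg_right (cB a) hDmax0)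
      _ = (A.card : ℝ) * ((2*T/(q:ℝ)^2 + 1) * Dmax) := by
          rw [Finset.sum_const, nsmul_eq_mul]
      _ ≤ (2*T/(q:ℝ) + 1) * ((2*T/(q:ℝ)^2 + 1) * Dmax) :=
          mul_le_mul_of_nonneg_right cA hBDnn
  -- card of T0
  have hT0card : (T0.card : ℝ) ≤ 8 * (2*T/(q:ℝ) + 1) := by
    have hfsub : (E0 ×ˢ E0).filter (fun p : ℤ×ℤ => p.1 = 0 ∨ p.2 = 0) ⊆
        (({0}:Finset ℤ) ×ˢ E0) ∪ (E0 ×ˢ ({0}:Finset ℤ)) := by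
      intro p hp
      simp only [Finset.mem_filter, Finset.mem_product, Finset.mem_union,
        Finset.mem_singleton] at hp ⊢
      rcases hp.2 with h|h
      · exact Or.inl ⟨h, hp.1.2⟩
      · exact Or.inr ⟨hp.1.1, h⟩
    have hfc : ((E0 ×ˢ E0).filter (fun p : ℤ×ℤ => p.1 = 0 ∨ p.2 = 0)).card ≤ 2 * E0.card := by
      calc ((E0 ×ˢ E0).filter (fun p : ℤ×ℤ => p.1 = 0 ∨ p.2 = 0)).card
          ≤ ((({0}:Finset ℤ) ×ˢ E0) ∪ (E0 ×ˢ ({0}:Finset ℤ))).card :=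
            Finset.card_le_card hfsub
        _ ≤ (({0}:Finset ℤ) ×ˢ E0).card + (E0 ×ˢ ({0}:Finset ℤ)).card :=
            Finset.card_union_le _ _
        _ = 2 * E0.card := by
            rw [Finset.card_product, Finset.card_product, Finset.card_singleton]
            ring
    have hT0c : T0.card = 2 * (2 * ((E0 ×ˢ E0).filter
        (fun p : ℤ×ℤ => p.1 = 0 ∨ p.2 = 0)).card) := by
      rw [hT0def, Finset.card_product, Finset.card_product]
      norm_num
    have : T0.card ≤ 8 * E0.card := by omega
    calc (T0.card : ℝ) ≤ 8 * (E0.card : ℝ) := by exact_mod_cast this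
      _ ≤ 8 * (2*T/(q:ℝ) + 1) := by linarith
  -- combine
  have hS0card : (S0.ncard : ℝ) ≤ 8 * (2*T/(q:ℝ) + 1) := by
    have := ncard_le_of_emb hmem0
    calc (S0.ncard : ℝ) ≤ (T0.card : ℝ) := by exact_mod_cast this
      _ ≤ _ := hT0card
  have hS1card : (S1.ncard : ℝ) ≤ (2*T/(q:ℝ) + 1) * ((2*T/(q:ℝ)^2 + 1) * Dmax) := by
    have := ncard_le_of_emb hmem1
    calc (S1.ncard : ℝ) ≤ (T1.card : ℝ) := by exact_mod_cast this
      _ ≤ _ := hT1card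
  have hsplitcard : (S.ncard : ℝ) ≤ (S0.ncard : ℝ) + (S1.ncard : ℝ) := by
    rw [hSsplit]
    exact_mod_cast Set.ncard_union_le S0 S1
  set X : ℝ := T ^ 2 / (q:ℝ) ^ 3 + T / (q:ℝ) + 1 with hXdef
  have hX0 : (0:ℝ) ≤ X := by positivity
  have hTq0 : (0:ℝ) ≤ T/(q:ℝ) := by positivity
  have hT2q3 : (0:ℝ) ≤ T^2/(q:ℝ)^3 := by positivity
  have hXa : 2*T/(q:ℝ) + 1 ≤ 2*X := by
    rw [hXdef]
    have : 2*T/(q:ℝ) = 2*(T/(q:ℝ)) := by ring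
    linarith
  have hq23 : T/(q:ℝ)^2 ≤ T/(q:ℝ) := by
    gcongr
    nlinarith
  have hprod : (2*T/(q:ℝ)+1) * (2*T/(q:ℝ)^2+1) ≤ 4*X := by
    have e1 : (T/(q:ℝ)) * (T/(q:ℝ)^2) = T^2/(q:ℝ)^3 := by
      field_simp
    have e2 : (0:ℝ) ≤ T/(q:ℝ)^2 := by positivity
    have e3 : 2*T/(q:ℝ) = 2*(T/(q:ℝ)) := by ring
    have e4 : 2*T/(q:ℝ)^2 = 2*(T/(q:ℝ)^2) := by ring
    rw [hXdef, e3, e4]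
    nlinarith [e1, hq23, hTq0, e2]
  have hDle : Dmax ≤ 2*Cd*2^(ε/2)*T^ε := by
    rw [hDmaxdef]
    have hm : ((2:ℝ)*T^2)^(ε/2) = 2^(ε/2)*(T^2)^(ε/2) :=
      Real.mul_rpow (by norm_num) (by positivity)
    have h2' : ((T:ℝ)^2)^(ε/2) = T^ε := by
      rw [← Real.rpow_natCast T 2, ← Real.rpow_mul hT0.le]
      congr 1
      push_cast
      ring
    rw [hm, h2']
    exact le_of_eq (by ring)
  have final1 : 8 * (2*T/(q:ℝ) + 1) ≤ 16*X*T^ε := by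
    have h1 : 8 * (2*T/(q:ℝ) + 1) ≤ 16*X := by linarith
    nlinarith [hX0, hTε]
  have final2 : (2*T/(q:ℝ) + 1) * ((2*T/(q:ℝ)^2 + 1) * Dmax) ≤ 4*X*(2*Cd*2^(ε/2)*T^ε) := by
    calc (2*T/(q:ℝ) + 1) * ((2*T/(q:ℝ)^2 + 1) * Dmax)
        = ((2*T/(q:ℝ)+1) * (2*T/(q:ℝ)^2+1)) * Dmax := by ring
      _ ≤ (4*X) * Dmax := mul_le_mul_of_nonneg_right hprod hDmax0
      _ ≤ (4*X) * (2*Cd*2^(ε/2)*T^ε) := by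
          apply mul_le_mul_of_nonneg_left hDle (by positivity)
  calc (S.ncard : ℝ) ≤ (S0.ncard : ℝ) + (S1.ncard : ℝ) := hsplitcard
    _ ≤ 8 * (2*T/(q:ℝ) + 1) + (2*T/(q:ℝ) + 1) * ((2*T/(q:ℝ)^2 + 1) * Dmax) :=
        add_le_add hS0card hS1card
    _ ≤ 16*X*T^ε + 4*X*(2*Cd*2^(ε/2)*T^ε) := add_le_add final1 final2
    _ = (16 + 8 * Cd * 2 ^ (ε/2)) * T ^ ε * X := by ring
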